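/- Let E ∈ ℂ^{n×n} with all eigenvalues having positive real part. For θ ∈ [0,π] define E(θ) = (cos θ · 𝟙 + i sin θ · E)^{-1}(cos θ · E + i sin θ · 𝟙). Then cos θ·𝟙 + i sin θ·E is invertible for each θ, E(θ) solves the matrix ODE E'(θ) = i(𝟙 − E(θ)²) with E(0) = E, and ∫₀^π E(θ) dθ = π·𝟙. -/

import Mathlib

open Matrix MeasureTheory

attribute [local instance] Matrix.linftyOpNormedAddCommGroup Matrix.linftyOpNormedRing
  Matrix.linftyOpNormedSpace Matrix.linftyOpNormedAlgebra


/-- the rotated matrix `E(θ) = (cos θ·𝟙 + i sin θ·E)⁻¹ (cos θ·E + i sin θ·𝟙)` -/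
noncomputable def Erot {n : ℕ} (E : Matrix (Fin n) (Fin n) ℂ) (θ : ℝ) :
    Matrix (Fin n) (Fin n) ℂ :=
  ((Real.cos θ : ℂ) • (1 : Matrix (Fin n) (Fin n) ℂ) + (Complex.I * Real.sin θ) • E)⁻¹
    * ((Real.cos θ : ℂ) • E + (Complex.I * Real.sin θ) • (1 : Matrix (Fin n) (Fin n) ℂ))

namespace Stmt13Aux

variable {n : ℕ}

abbrev Mat (n : ℕ) := Matrix (Fin n) (Fin n) ℂ

noncomputable def Am (F : Mat n) (θ : ℝ) : Mat n :=
  (Real.cos θ : ℂ) • (1 : Mat n) + (Complex.I * Real.sin θ) • F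

noncomputable def Bm (F : Mat n) (θ : ℝ) : Mat n :=
  (Real.cos θ : ℂ) • F + (Complex.I * Real.sin θ) • (1 : Mat n)

noncomputable def Cm (F : Mat n) (θ : ℝ) : Mat n := Ring.inverse (Am F θ) * Bm F θ

noncomputable instance : CompleteSpace (Mat n) :=
  FiniteDimensional.complete ℂ (Mat n)

lemma isUnit_lin (F : Mat n) (a b : ℂ) (h0 : b = 0 → a ≠ 0)
    (hs : ∀ μ ∈ spectrum ℂ F, a + b * μ ≠ 0) : IsUnit (a • (1 : Mat n) + b • F) := by
  rcases eq_or_ne b 0 with hb | hb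
  · subst hb
    simp only [zero_smul, add_zero]
    rw [← Algebra.algebraMap_eq_smul_one]
    exact (isUnit_iff_ne_zero.2 (h0 rfl)).map (algebraMap ℂ (Mat n))
  · have hμ : (-a/b) ∉ spectrum ℂ F := by
      intro hmem
      exact hs _ hmem (by field_simp; ring)
    rw [spectrum.notMem_iff] at hμ
    have key : a • (1 : Mat n) + b • F = ((-b) • (1:Mat n)) * (algebraMap ℂ (Mat n) (-a/b) - F) := by
      rw [Algebra.algebraMap_eq_smul_one, smul_mul_assoc, one_mul, smul_sub, smul_smul]
      rw [show (-b) * (-a/b) = a by field_simp]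
      module
    rw [key]
    refine IsUnit.mul ?_ hμ
    rw [← Algebra.algebraMap_eq_smul_one]
    exact (isUnit_iff_ne_zero.2 (neg_ne_zero.2 hb)).map (algebraMap ℂ (Mat n))

end Stmt13Aux
namespace Stmt13Aux2
open Stmt13Aux Complex

variable {n : ℕ}

/-- homotopy from `1` to `E` -/
noncomputable def Et (E : Mat n) (t : ℝ) : Mat n := (t : ℂ) • E + (1 - (t : ℂ)) • (1 : Mat n)

lemma Et_zero (E : Mat n) : Et E 0 = 1 := by simp [Et]
lemma Et_one (E : Mat n) : Et E 1 = E := by simp [Et]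

lemma Am_Et (E : Mat n) (t θ : ℝ) :
    Am (Et E t) θ = ((Real.cos θ : ℂ) + I * Real.sin θ * (1 - t)) • (1 : Mat n)
      + (I * Real.sin θ * t) • E := by
  unfold Am Et; module

lemma Bm_Et (E : Mat n) (t θ : ℝ) :
    Bm (Et E t) θ = ((I * Real.sin θ) + (Real.cos θ : ℂ) * (1 - t)) • (1 : Mat n)
      + ((Real.cos θ : ℂ) * t) • E := by
  unfold Bm Et; module

lemma isUnit_Am_Et (E : Mat n) (hE : ∀ μ ∈ spectrum ℂ E, 0 < μ.re)
    {t : ℝ} (ht : t ∈ Set.Icc (0:ℝ) 1) (θ : ℝ) : IsUnit (Am (Et E t) θ) := by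
  have hcs := Real.sin_sq_add_cos_sq θ
  rw [Am_Et]
  apply isUnit_lin
  · intro hb ha
    have hst : Real.sin θ * t = 0 := by
      rcases mul_eq_zero.1 hb with h | h
      · rcases mul_eq_zero.1 h with h' | h'
        · exact absurd h' I_ne_zero
        · exact_mod_cast mul_eq_zero_of_left (by exact_mod_cast h') t
      · exact mul_eq_zero_of_right _ (by exact_mod_cast h)
    -- real and imaginary parts of a
    have hre : Real.cos θ = 0 := by
      have := congrArg Complex.re ha; simpa [Complex.cos_ofReal_re] using this
    have him : Real.sin θ * (1 - t) = 0 := by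
      have := congrArg Complex.im ha
      simpa [Complex.add_im, Complex.mul_im, Complex.mul_re, Complex.sin_ofReal_re] using this
    have hsin : Real.sin θ = 0 := by nlinarith [hst, him]
    rw [hsin, hre] at hcs; norm_num at hcs
  · intro μ hμ h
    have hre := congrArg Complex.re h
    have him := congrArg Complex.im h
    simp only [Complex.add_re, Complex.add_im, Complex.mul_re, Complex.mul_im, Complex.I_re,
      Complex.I_im, Complex.ofReal_re, Complex.ofReal_im, Complex.sub_re, Complex.sub_im,
      Complex.one_re, Complex.one_im, Complex.zero_re, Complex.zero_im] at hre him
    have hposRe := hE μ hμ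
    -- from the imaginary part: sin θ * ((1-t) + t * μ.re) = 0
    have him' : Real.sin θ * ((1 - t) + t * μ.re) = 0 := by nlinarith [him]
    have hfac : (0:ℝ) < (1 - t) + t * μ.re := by
      rcases eq_or_lt_of_le ht.1 with h0 | h0
      · simp [← h0]
      · nlinarith [ht.2]
    have hsin : Real.sin θ = 0 := by
      rcases mul_eq_zero.1 him' with h' | h'
      · exact h'
      · exact absurd h' (ne_of_gt hfac)
    have hcos : Real.cos θ = 0 := by
      rw [hsin] at hre; simp at hre; linarith [hre]
    rw [hsin, hcos] at hcs; norm_num at hcs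

end Stmt13Aux2
namespace Stmt13Aux3
open Stmt13Aux Stmt13Aux2 Complex

variable {n : ℕ}

lemma mul_comm_lin (F : Mat n) (a b c d : ℂ) :
    (a • (1:Mat n) + b • F) * (c • (1:Mat n) + d • F)
      = (c • (1:Mat n) + d • F) * (a • (1:Mat n) + b • F) := by
  simp only [add_mul, mul_add, smul_mul_assoc, mul_smul_comm, one_mul, mul_one, smul_smul]
  module

lemma commute_Am_Bm (F : Mat n) (θ : ℝ) : Commute (Am F θ) (Bm F θ) := by
  have := mul_comm_lin F (Real.cos θ) (I * Real.sin θ) (I * Real.sin θ) (Real.cos θ)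
  unfold Commute SemiconjBy Am Bm
  rw [show (Real.cos θ:ℂ) • F + (I * Real.sin θ) • (1:Mat n)
      = (I * Real.sin θ) • (1:Mat n) + (Real.cos θ:ℂ) • F from add_comm _ _]
  exact this

lemma key_identity (F : Mat n) (θ : ℝ) :
    (Real.cos θ : ℂ) • Am F θ - (I * Real.sin θ) • Bm F θ = 1 := by
  have h1 : ((Real.sin θ : ℂ))^2 + ((Real.cos θ : ℂ))^2 = 1 := by
    norm_cast; exact Real.sin_sq_add_cos_sq θ
  unfold Am Bm
  calc (Real.cos θ : ℂ) • ((Real.cos θ : ℂ) • (1:Mat n) + (I * Real.sin θ) • F)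
        - (I * Real.sin θ) • ((Real.cos θ : ℂ) • F + (I * Real.sin θ) • (1:Mat n))
      = ((Real.cos θ : ℂ) * (Real.cos θ) - (I * Real.sin θ) * (I * Real.sin θ)) • (1:Mat n) := by
        module
    _ = (1:ℂ) • (1:Mat n) := by
        congr 1
        linear_combination h1 - ((Real.sin θ : ℂ))^2 * Complex.I_sq
    _ = 1 := one_smul _ _

lemma ring_inverse_comm {a b : Mat n} (h : Commute a b) (hu : IsUnit a) :
    Ring.inverse a * b = b * Ring.inverse a := by
  have h1 : a * Ring.inverse a = 1 := Ring.mul_inverse_cancel a hu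
  have h2 : Ring.inverse a * a = 1 := Ring.inverse_mul_cancel a hu
  calc Ring.inverse a * b = Ring.inverse a * b * (a * Ring.inverse a) := by rw [h1, mul_one]
    _ = Ring.inverse a * (b * a) * Ring.inverse a := by simp only [mul_assoc]
    _ = Ring.inverse a * (a * b) * Ring.inverse a := by rw [← h.eq]
    _ = (Ring.inverse a * a) * (b * Ring.inverse a) := by simp only [mul_assoc]
    _ = b * Ring.inverse a := by rw [h2, one_mul]

lemma hasDerivAt_Am (F : Mat n) (θ : ℝ) : HasDerivAt (Am F) (Complex.I • Bm F θ) θ := by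
  have h1 : HasDerivAt (fun θ : ℝ => (Real.cos θ : ℂ)) (-Real.sin θ : ℝ) θ :=
    (Real.hasDerivAt_cos θ).ofReal_comp
  have h2 : HasDerivAt (fun θ : ℝ => (I * Real.sin θ : ℂ)) (I * Real.cos θ) θ := by
    simpa using (((Real.hasDerivAt_sin θ).ofReal_comp).const_mul I)
  have h3 := (h1.smul_const (1 : Mat n)).add (h2.smul_const F)
  have heq : ((-Real.sin θ : ℝ) : ℂ) • (1:Mat n) + (I * Real.cos θ) • F = Complex.I • Bm F θ := by
    unfold Bm
    calc ((-Real.sin θ : ℝ) : ℂ) • (1:Mat n) + (I * Real.cos θ) • F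
        = (I * (I * Real.sin θ) - (I * I + 1) * Real.sin θ) • (1:Mat n) + (I * Real.cos θ) • F := by
          congr 1; congr 1; push_cast; ring
      _ = Complex.I • ((Real.cos θ : ℂ) • F + (I * Real.sin θ) • (1:Mat n)) := by
          rw [Complex.I_mul_I]; module
  rw [heq] at h3
  exact h3

lemma hasDerivAt_Bm (F : Mat n) (θ : ℝ) : HasDerivAt (Bm F) (Complex.I • Am F θ) θ := by
  have h1 : HasDerivAt (fun θ : ℝ => (Real.cos θ : ℂ)) (-Real.sin θ : ℝ) θ :=
    (Real.hasDerivAt_cos θ).ofReal_comp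
  have h2 : HasDerivAt (fun θ : ℝ => (I * Real.sin θ : ℂ)) (I * Real.cos θ) θ := by
    simpa using (((Real.hasDerivAt_sin θ).ofReal_comp).const_mul I)
  have h3 := (h1.smul_const F).add (h2.smul_const (1 : Mat n))
  have heq : ((-Real.sin θ : ℝ) : ℂ) • F + (I * Real.cos θ) • (1:Mat n) = Complex.I • Am F θ := by
    unfold Am
    calc ((-Real.sin θ : ℝ) : ℂ) • F + (I * Real.cos θ) • (1:Mat n)
        = (I * (I * Real.sin θ) - (I * I + 1) * Real.sin θ) • F + (I * Real.cos θ) • (1:Mat n) := by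
          congr 1; congr 1; push_cast; ring
      _ = Complex.I • ((Real.cos θ : ℂ) • (1:Mat n) + (I * Real.sin θ) • F) := by
          rw [Complex.I_mul_I]; module
  rw [heq] at h3
  exact h3

end Stmt13Aux3
namespace Stmt13Aux4
open Stmt13Aux Stmt13Aux2 Stmt13Aux3 Complex

variable {n : ℕ}

lemma hasDerivAt_inverse {f : ℝ → Mat n} {f' : Mat n} {x : ℝ} (hf : HasDerivAt f f' x)
    (hu : IsUnit (f x)) :
    HasDerivAt (fun y => Ring.inverse (f y))
      (-(Ring.inverse (f x) * f' * Ring.inverse (f x))) x := by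
  obtain ⟨u, hu'⟩ := hu
  have h := hasFDerivAt_ringInverse (𝕜 := ℝ) (R := Mat n) u
  rw [hu'] at h
  have h2 := h.comp_hasDerivAt x hf
  refine h2.congr_deriv (Eq.symm ?_)
  have hinv : Ring.inverse (f x) = (↑u⁻¹ : Mat n) := by rw [← hu', Ring.inverse_unit]
  simp [hinv]

lemma hasDerivAt_inv_mul {A B : ℝ → Mat n} {A' B' : Mat n} {x : ℝ}
    (hA : HasDerivAt A A' x) (hB : HasDerivAt B B' x) (hu : IsUnit (A x)) :
    HasDerivAt (fun y => Ring.inverse (A y) * B y)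
      (-(Ring.inverse (A x) * A' * Ring.inverse (A x)) * B x + Ring.inverse (A x) * B') x :=
  (hasDerivAt_inverse hA hu).mul hB

lemma hasDerivAt_Cm (F : Mat n) (θ : ℝ) (hu : IsUnit (Am F θ)) :
    HasDerivAt (Cm F) (Complex.I • ((1:Mat n) - (Cm F θ)^2)) θ := by
  have h := hasDerivAt_inv_mul (hasDerivAt_Am F θ) (hasDerivAt_Bm F θ) hu
  unfold Cm
  convert h using 1
  set v := Ring.inverse (Am F θ) with hv
  have hva : v * Am F θ = 1 := Ring.inverse_mul_cancel _ hu
  simp only [pow_two, smul_sub, mul_smul_comm, smul_mul_assoc, neg_mul, mul_assoc, hva]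
  module

lemma inv_sq_eq (F : Mat n) (θ : ℝ) (hu : IsUnit (Am F θ)) :
    Ring.inverse (Am F θ) * Ring.inverse (Am F θ)
      = (Real.cos θ : ℂ) • Ring.inverse (Am F θ)
        - (I * Real.sin θ) • (Ring.inverse (Am F θ) * Bm F θ * Ring.inverse (Am F θ)) := by
  set v := Ring.inverse (Am F θ) with hv
  have hva : v * Am F θ = 1 := Ring.inverse_mul_cancel _ hu
  calc v * v = v * (1:Mat n) * v := by rw [mul_one]
    _ = v * ((Real.cos θ : ℂ) • Am F θ - (I * Real.sin θ) • Bm F θ) * v := by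
        rw [key_identity]
    _ = (Real.cos θ : ℂ) • (v * Am F θ * v) - (I * Real.sin θ) • (v * Bm F θ * v) := by
        rw [mul_sub, sub_mul, mul_smul_comm, mul_smul_comm, smul_mul_assoc, smul_mul_assoc]
    _ = (Real.cos θ : ℂ) • v - (I * Real.sin θ) • (v * Bm F θ * v) := by
        rw [hva, one_mul]

lemma hasDerivAt_sin_inv (F : Mat n) (hu : ∀ θ, IsUnit (Am F θ)) (θ : ℝ) :
    HasDerivAt (fun θ : ℝ => ((Real.sin θ : ℂ)) • Ring.inverse (Am F θ))
      (Ring.inverse (Am F θ)^2) θ := by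
  have hs : HasDerivAt (fun θ : ℝ => ((Real.sin θ : ℂ))) ((Real.cos θ : ℝ) : ℂ) θ :=
    (Real.hasDerivAt_sin θ).ofReal_comp
  have hinv := hasDerivAt_inverse (hasDerivAt_Am F θ) (hu θ)
  have h := hs.smul hinv
  refine h.congr_deriv (Eq.symm ?_)
  set v := Ring.inverse (Am F θ) with hv
  have h1 : v^2 = (Real.cos θ : ℂ) • v - (I * Real.sin θ) • (v * Bm F θ * v) := by
    rw [pow_two, inv_sq_eq F θ (hu θ)]
  rw [h1]
  simp only [mul_smul_comm, smul_mul_assoc, mul_assoc, smul_neg, smul_smul]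
  module

lemma continuous_Am (F : Mat n) : Continuous (Am F) := by
  unfold Am; fun_prop

lemma continuous_inv_Am (F : Mat n) (hu : ∀ θ, IsUnit (Am F θ)) :
    Continuous fun θ => Ring.inverse (Am F θ) := by
  rw [continuous_iff_continuousAt]
  intro θ
  have h1 : ContinuousAt Ring.inverse (Am F θ) := by
    have := NormedRing.inverse_continuousAt (hu θ).unit
    rwa [(hu θ).unit_spec] at this
  exact h1.comp (continuous_Am F).continuousAt

lemma integral_inv_sq (F : Mat n) (hu : ∀ θ, IsUnit (Am F θ)) (ν : Mat n) :
    (∫ θ in (0:ℝ)..Real.pi, ν * Ring.inverse (Am F θ)^2) = 0 := by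
  have hcont : Continuous fun θ : ℝ => ν * Ring.inverse (Am F θ)^2 :=
    continuous_const.mul ((continuous_inv_Am F hu).pow 2)
  have hderiv : ∀ θ ∈ Set.uIcc (0:ℝ) Real.pi,
      HasDerivAt (fun θ : ℝ => ν * ((Real.sin θ : ℂ) • Ring.inverse (Am F θ)))
        (ν * Ring.inverse (Am F θ)^2) θ :=
    fun θ _ => (hasDerivAt_sin_inv F hu θ).const_mul ν
  rw [intervalIntegral.integral_eq_sub_of_hasDerivAt hderiv (hcont.intervalIntegrable _ _)]
  simp

end Stmt13Aux4
namespace Stmt13Aux5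
open Stmt13Aux Stmt13Aux2 Stmt13Aux3 Stmt13Aux4 Complex

variable {n : ℕ}

lemma hasDerivAt_Am_t (E : Mat n) (θ t : ℝ) :
    HasDerivAt (fun t : ℝ => Am (Et E t) θ) ((I * Real.sin θ) • (E - 1)) t := by
  have hfun : (fun t : ℝ => Am (Et E t) θ)
      = fun t : ℝ => ((Real.cos θ : ℂ) + I * Real.sin θ * (1 - (t:ℂ))) • (1 : Mat n)
        + (I * Real.sin θ * (t:ℂ)) • E := funext fun t => Am_Et E t θ
  rw [hfun]
  have hid : HasDerivAt (fun t : ℝ => ((t : ℝ) : ℂ)) 1 t := by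
    simpa using (hasDerivAt_id t).ofReal_comp
  have h1 := (((hid.const_sub 1).const_mul (I * (Real.sin θ : ℂ))).const_add (Real.cos θ : ℂ))
  have h2 := hid.const_mul (I * (Real.sin θ : ℂ))
  have h3 := (h1.smul_const (1 : Mat n)).add (h2.smul_const E)
  refine h3.congr_deriv (Eq.symm ?_)
  module

lemma hasDerivAt_Bm_t (E : Mat n) (θ t : ℝ) :
    HasDerivAt (fun t : ℝ => Bm (Et E t) θ) ((Real.cos θ : ℂ) • (E - 1)) t := by
  have hfun : (fun t : ℝ => Bm (Et E t) θ)
      = fun t : ℝ => ((I * Real.sin θ) + (Real.cos θ : ℂ) * (1 - (t:ℂ))) • (1 : Mat n)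
        + ((Real.cos θ : ℂ) * (t:ℂ)) • E := funext fun t => Bm_Et E t θ
  rw [hfun]
  have hid : HasDerivAt (fun t : ℝ => ((t : ℝ) : ℂ)) 1 t := by
    simpa using (hasDerivAt_id t).ofReal_comp
  have h1 := (((hid.const_sub 1).const_mul ((Real.cos θ : ℂ))).const_add (I * (Real.sin θ : ℂ)))
  have h2 := hid.const_mul ((Real.cos θ : ℂ))
  have h3 := (h1.smul_const (1 : Mat n)).add (h2.smul_const E)
  refine h3.congr_deriv (Eq.symm ?_)
  module

lemma hasDerivAt_Cm_t (E : Mat n) (θ t : ℝ) (hu : IsUnit (Am (Et E t) θ)) :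
    HasDerivAt (fun t : ℝ => Cm (Et E t) θ)
      ((E - 1) * Ring.inverse (Am (Et E t) θ)^2) t := by
  have h := hasDerivAt_inv_mul (hasDerivAt_Am_t E θ t) (hasDerivAt_Bm_t E θ t) hu
  have hfun : (fun t : ℝ => Cm (Et E t) θ)
      = fun t : ℝ => Ring.inverse (Am (Et E t) θ) * Bm (Et E t) θ := rfl
  rw [hfun]
  convert h using 1
  have hva : Ring.inverse (Am (Et E t) θ) * Am (Et E t) θ = 1 :=
    Ring.inverse_mul_cancel _ hu
  have hcommB : Commute (Am (Et E t) θ) (Bm (Et E t) θ) := commute_Am_Bm _ θ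
  have hcommν : Commute (Am (Et E t) θ) (E - 1) := by
    rw [Am_Et, show E - (1:Mat n) = (-1:ℂ) • (1:Mat n) + (1:ℂ) • E from by module]
    exact mul_comm_lin E _ _ _ _
  have e1 : Ring.inverse (Am (Et E t) θ) * (E - 1)
      = (E - 1) * Ring.inverse (Am (Et E t) θ) := ring_inverse_comm hcommν hu
  have e2 : Ring.inverse (Am (Et E t) θ) * Bm (Et E t) θ
      = Bm (Et E t) θ * Ring.inverse (Am (Et E t) θ) := ring_inverse_comm hcommB hu
  rw [pow_two, inv_sq_eq (Et E t) θ hu]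
  simp only [mul_smul_comm, smul_mul_assoc, neg_mul, mul_sub, ← mul_assoc, e1]
  rw [show (E - 1) * Ring.inverse (Am (Et E t) θ) * Ring.inverse (Am (Et E t) θ) * Bm (Et E t) θ
      = (E - 1) * Ring.inverse (Am (Et E t) θ) * Bm (Et E t) θ * Ring.inverse (Am (Et E t) θ) from by
    rw [mul_assoc ((E - 1) * Ring.inverse (Am (Et E t) θ)), e2, ← mul_assoc]]
  module

end Stmt13Aux5
namespace Stmt13Aux6
open Stmt13Aux Stmt13Aux2 Stmt13Aux3 Stmt13Aux4 Stmt13Aux5 Complex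

variable {n : ℕ}

attribute [-instance] instTopologicalSpaceMatrix Matrix.instUniformSpace

noncomputable def Dm (E : Mat n) (t θ : ℝ) : Mat n :=
  (E - 1) * Ring.inverse (Am (Et E t) θ)^2

lemma continuous_Am2 (E : Mat n) : Continuous fun p : ℝ × ℝ => Am (Et E p.2) p.1 := by
  unfold Am Et; fun_prop

lemma continuousAt_inv_Am2 (E : Mat n) (hE : ∀ μ ∈ spectrum ℂ E, 0 < μ.re)
    {p : ℝ × ℝ} (hp : p.2 ∈ Set.Icc (0:ℝ) 1) :
    ContinuousAt (fun p : ℝ × ℝ => Dm E p.2 p.1) p := by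
  have hu := isUnit_Am_Et E hE hp p.1
  have h1 : ContinuousAt Ring.inverse (Am (Et E p.2) p.1) := by
    have := NormedRing.inverse_continuousAt hu.unit
    rwa [hu.unit_spec] at this
  have h2 : ContinuousAt (fun q : ℝ × ℝ => Ring.inverse (Am (Et E q.2) q.1)) p :=
    ContinuousAt.comp (x := p) (f := fun q : ℝ × ℝ => Am (Et E q.2) q.1) h1 (continuous_Am2 E).continuousAt
  exact continuousAt_const.mul (h2.pow 2)

lemma integral_Dm_t (E : Mat n) (hE : ∀ μ ∈ spectrum ℂ E, 0 < μ.re) (θ : ℝ) :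
    (∫ t in (0:ℝ)..1, Dm E t θ) = Cm E θ - 1 := by
  have hderiv : ∀ t ∈ Set.uIcc (0:ℝ) 1,
      HasDerivAt (fun t => Cm (Et E t) θ) (Dm E t θ) t := by
    intro t ht
    rw [Set.uIcc_of_le zero_le_one] at ht
    exact hasDerivAt_Cm_t E θ t (isUnit_Am_Et E hE ht θ)
  have hint : IntervalIntegrable (fun t => Dm E t θ) MeasureTheory.volume 0 1 := by
    apply ContinuousOn.intervalIntegrable
    intro t ht
    rw [Set.uIcc_of_le zero_le_one] at ht
    exact (continuousAt_inv_Am2 E hE (p := (θ, t)) ht).comp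
      (Continuous.continuousAt (by fun_prop)) |>.continuousWithinAt
  rw [intervalIntegral.integral_eq_sub_of_hasDerivAt hderiv hint, Et_one, Et_zero]
  have hu0 : IsUnit (Am (1:Mat n) θ) := by
    have := isUnit_Am_Et E hE (Set.left_mem_Icc.2 zero_le_one) θ
    rwa [Et_zero] at this
  have hCm1 : Cm (1:Mat n) θ = 1 := by
    unfold Cm
    have hBA : Bm (1:Mat n) θ = Am (1:Mat n) θ := rfl
    rw [hBA]
    exact Ring.inverse_mul_cancel _ hu0
  rw [hCm1]

lemma integral_Dm_θ (E : Mat n) (hE : ∀ μ ∈ spectrum ℂ E, 0 < μ.re)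
    {t : ℝ} (ht : t ∈ Set.Icc (0:ℝ) 1) :
    (∫ θ in (0:ℝ)..Real.pi, Dm E t θ) = 0 :=
  integral_inv_sq (Et E t) (fun θ => isUnit_Am_Et E hE ht θ) (E - 1)

lemma swap_integrals (E : Mat n) (hE : ∀ μ ∈ spectrum ℂ E, 0 < μ.re) :
    (∫ θ in (0:ℝ)..Real.pi, ∫ t in (0:ℝ)..1, Dm E t θ)
      = ∫ t in (0:ℝ)..1, ∫ θ in (0:ℝ)..Real.pi, Dm E t θ := by
  have hcont : ContinuousOn (fun p : ℝ × ℝ => Dm E p.2 p.1)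
      (Set.Icc (0:ℝ) Real.pi ×ˢ Set.Icc (0:ℝ) 1) := by
    intro p hp
    exact (continuousAt_inv_Am2 E hE hp.2).continuousWithinAt
  have hIntOn : MeasureTheory.IntegrableOn (fun p : ℝ × ℝ => Dm E p.2 p.1)
      (Set.Icc (0:ℝ) Real.pi ×ˢ Set.Icc (0:ℝ) 1)
      (MeasureTheory.volume.prod MeasureTheory.volume) :=
    hcont.integrableOn_compact (isCompact_Icc.prod isCompact_Icc)
  have hInt : MeasureTheory.Integrable (Function.uncurry fun θ t => Dm E t θ)
      ((MeasureTheory.volume.restrict (Set.Ioc (0:ℝ) Real.pi)).prod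
        (MeasureTheory.volume.restrict (Set.Ioc (0:ℝ) 1))) := by
    rw [MeasureTheory.Measure.prod_restrict]
    exact (hIntOn.mono_set (Set.prod_mono Set.Ioc_subset_Icc_self Set.Ioc_subset_Icc_self))
  rw [intervalIntegral.integral_of_le Real.pi_pos.le,
    intervalIntegral.integral_of_le (zero_le_one (α := ℝ))]
  simp_rw [intervalIntegral.integral_of_le (zero_le_one (α := ℝ)),
    intervalIntegral.integral_of_le Real.pi_pos.le]
  exact MeasureTheory.integral_integral_swap hInt

lemma integral_Cm (E : Mat n) (hE : ∀ μ ∈ spectrum ℂ E, 0 < μ.re) :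
    (∫ θ in (0:ℝ)..Real.pi, Cm E θ) = (Real.pi : ℂ) • (1 : Mat n) := by
  have hu1 : ∀ θ, IsUnit (Am E θ) := by
    intro θ
    have := isUnit_Am_Et E hE (Set.right_mem_Icc.2 zero_le_one) θ
    rwa [Et_one] at this
  have hCcont : Continuous (Cm E) := by
    have hB : Continuous (Bm E) := by unfold Bm; fun_prop
    exact (continuous_inv_Am E hu1).mul hB
  have hL : (∫ θ in (0:ℝ)..Real.pi, ∫ t in (0:ℝ)..1, Dm E t θ)
      = (∫ θ in (0:ℝ)..Real.pi, Cm E θ) - (Real.pi : ℂ) • (1 : Mat n) := by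
    have : (fun θ => ∫ t in (0:ℝ)..1, Dm E t θ) = fun θ => Cm E θ - 1 :=
      funext fun θ => integral_Dm_t E hE θ
    rw [this, intervalIntegral.integral_sub (hCcont.intervalIntegrable _ _)
      (continuous_const.intervalIntegrable _ _), intervalIntegral.integral_const]
    congr 1
    rw [sub_zero, show ((Real.pi : ℂ)) = algebraMap ℝ ℂ Real.pi from rfl, algebraMap_smul]
  have hR : (∫ t in (0:ℝ)..1, ∫ θ in (0:ℝ)..Real.pi, Dm E t θ) = 0 := by
    rw [intervalIntegral.integral_congr (g := fun _ => (0 : Mat n)) (fun t ht => by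
      rw [Set.uIcc_of_le zero_le_one] at ht
      exact integral_Dm_θ E hE ht)]
    simp
  rw [swap_integrals E hE, hR] at hL
  exact (sub_eq_zero.1 hL.symm)

end Stmt13Aux6

namespace Stmt13Final
open Stmt13Aux Stmt13Aux2 Stmt13Aux3 Stmt13Aux4 Stmt13Aux5 Stmt13Aux6

variable {n : ℕ}

lemma Erot_eq (E : Mat n) : Erot E = Cm E := funext fun θ => by
  show (Am E θ)⁻¹ * Bm E θ = Cm E θ
  rw [Matrix.nonsing_inv_eq_ringInverse]
  rfl

end Stmt13Final

open Stmt13Aux Stmt13Aux2 Stmt13Aux3 Stmt13Aux4 Stmt13Aux5 Stmt13Aux6 Stmt13Final in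
/-- if all eigenvalues of `E` have positive real part, then for `θ ∈ [0,π]`
the matrix `cos θ·𝟙 + i sin θ·E` is invertible, `E(θ)` solves `E'(θ) = i(𝟙 − E(θ)²)` with
`E(0) = E`, and `∫₀^π E(θ) dθ = π·𝟙`. -/
theorem stmt13 (n : ℕ) (E : Matrix (Fin n) (Fin n) ℂ)
    (hE : ∀ μ ∈ spectrum ℂ E, 0 < μ.re) :
    (∀ θ ∈ Set.Icc (0:ℝ) Real.pi,
      IsUnit ((Real.cos θ : ℂ) • (1 : Matrix (Fin n) (Fin n) ℂ) + (Complex.I * Real.sin θ) • E)) ∧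
    Erot E 0 = E ∧
    (∀ θ ∈ Set.Icc (0:ℝ) Real.pi,
      HasDerivAt (Erot E) (Complex.I • ((1 : Matrix (Fin n) (Fin n) ℂ) - (Erot E θ)^2)) θ) ∧
    (∫ θ in (0:ℝ)..Real.pi, Erot E θ) = (Real.pi : ℂ) • (1 : Matrix (Fin n) (Fin n) ℂ) := by
  have hu1 : ∀ θ : ℝ, IsUnit (Am E θ) := by
    intro θ
    have := isUnit_Am_Et E hE (Set.right_mem_Icc.2 zero_le_one) θ
    rwa [Et_one] at this
  refine ⟨fun θ _ => hu1 θ, ?_, fun θ _ => ?_, ?_⟩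
  · simp [Erot]
  · rw [Erot_eq]
    exact hasDerivAt_Cm E θ (hu1 θ)
  · rw [Erot_eq]
    exact integral_Cm E hE
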